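/- Let K be a finitely generated group, let Φ be an automorphism of K, and let G = K ⋊_Φ ℤ be the semidirect product in which the generator 1 ∈ ℤ acts on K by Φ; identify K with the subgroup K × {0} of G. Then for every finite-index subgroup Γ of K there exists a finite-index subgroup G' of G such that G' ∩ K = Γ. In particular, G induces the full profinite topology on K. -/

import Mathlib

/-- A finitely generated group has only finitely many subgroups of a given finite index. -/
theorem aux_finite_subgroups {K : Type} [Group K] [Group.FG K] {d : ℕ} (hd : d ≠ 0) :
    Finite {H : Subgroup K // H.index = d} := by
  classical
  obtain ⟨T, hT⟩ := (Group.FG.out : (⊤ : Subgroup K).FG)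
  haveI : Finite (K →* Equiv.Perm (Fin d)) := by
    refine Finite.of_injective (fun φ => (fun t : T => φ t.1)) ?_
    intro φ₁ φ₂ h
    refine MonoidHom.eq_of_eqOn_dense hT ?_
    intro x hx
    exact congrFun h ⟨x, hx⟩
  have he : ∀ H : {H : Subgroup K // H.index = d}, Nonempty ((K ⧸ H.1) ≃ Fin d) := by
    intro H
    haveI : H.1.FiniteIndex := ⟨by rw [H.2]; exact hd⟩
    exact ⟨Finite.equivFinOfCardEq (by rw [← Subgroup.index_eq_card, H.2])⟩
  let e : ∀ H : {H : Subgroup K // H.index = d}, (K ⧸ H.1) ≃ Fin d := fun H => (he H).some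
  let π : ∀ H : {H : Subgroup K // H.index = d}, K →* Equiv.Perm (Fin d) := fun H =>
    MonoidHom.mk' (fun g => (e H).permCongr (MulAction.toPermHom K (K ⧸ H.1) g)) (by
      intro a b
      ext x
      simp [mul_smul])
  have hkey : ∀ (H : {H : Subgroup K // H.index = d}) (g : K),
      g ∈ H.1 ↔ π H g (e H ((1 : K) : K ⧸ H.1)) = e H ((1 : K) : K ⧸ H.1) := by
    intro H g
    have h1 : π H g (e H ((1 : K) : K ⧸ H.1)) = e H (g • ((1 : K) : K ⧸ H.1)) := by
      simp [π]
    rw [h1, (e H).apply_eq_iff_eq, MulAction.Quotient.smul_mk, smul_eq_mul, mul_one,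
      QuotientGroup.eq]
    simp
  refine Finite.of_injective (fun H => (π H, e H ((1 : K) : K ⧸ H.1))) ?_
  intro H₁ H₂ h
  rw [Prod.mk.injEq] at h
  exact Subtype.ext (Subgroup.ext fun g => by rw [hkey H₁ g, h.1, h.2, ← hkey H₂ g])

/-- Let `K` be a finitely generated group, `Φ` an automorphism of `K`, and
`G = K ⋊_Φ ℤ` the semidirect product in which the generator `1 ∈ ℤ` acts on `K` by `Φ`
(so `m ∈ ℤ` acts by `Φ^m`); `K` is identified with the subgroup `K × {0}` of `G` via
`SemidirectProduct.inl`. Then for every finite-index subgroup `Γ` of `K` there is a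
finite-index subgroup `G'` of `G` with `G' ∩ K = Γ`. In particular, `G` induces the
full profinite topology on `K`. -/
theorem semidirect_product_induces_full_profinite_topology_on_kernel
    {K : Type} [Group K] [Group.FG K] (Φ : MulAut K)
    (Γ : Subgroup K) (hΓ : Γ.FiniteIndex) :
    ∃ G' : Subgroup (K ⋊[zpowersHom (MulAut K) Φ] Multiplicative ℤ),
      G'.FiniteIndex ∧ ∀ k : K, SemidirectProduct.inl k ∈ G' ↔ k ∈ Γ := by
  classical
  have hd : Γ.index ≠ 0 := hΓ.index_ne_zero
  haveI hfin : Finite {H : Subgroup K // H.index = Γ.index} := aux_finite_subgroups hd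
  set Δ : Subgroup K := ⨅ H : {H : Subgroup K // H.index = Γ.index}, H.1 with hΔdef
  haveI hΔfi : Δ.FiniteIndex := Subgroup.finiteIndex_iInf fun H => ⟨by rw [H.2]; exact hd⟩
  have hΔle : Δ ≤ Γ :=
    iInf_le (fun H : {H : Subgroup K // H.index = Γ.index} => H.1) ⟨Γ, rfl⟩
  -- Δ is invariant under every automorphism of K
  have hcomap : ∀ σ : MulAut K, Δ.comap (σ : K →* K) = Δ := by
    have main : ∀ (σ : MulAut K) (x : K),
        (∀ H : Subgroup K, H.index = Γ.index → σ x ∈ H) →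
        ∀ H : Subgroup K, H.index = Γ.index → x ∈ H := by
      intro σ x h H hH
      have h2 : (H.comap (σ.symm : K →* K)).index = Γ.index := by
        rw [Subgroup.index_comap_of_surjective _ σ.symm.surjective]; exact hH
      have h3 := h _ h2
      rw [Subgroup.mem_comap] at h3
      simpa using h3
    intro σ
    ext x
    rw [Subgroup.mem_comap, hΔdef]
    simp only [Subgroup.mem_iInf, Subtype.forall]
    exact ⟨fun h => main σ x h, fun h H hH => by
      have h2 : (H.comap (σ : K →* K)).index = Γ.index := by
        rw [Subgroup.index_comap_of_surjective _ σ.surjective]; exact hH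
      have := h _ h2
      rwa [Subgroup.mem_comap] at this⟩
  have hmap : Δ.map (Φ : K →* K) = Δ := by
    rw [Subgroup.map_equiv_eq_comap_symm]
    exact hcomap Φ.symm
  haveI hΔnorm : Δ.Normal := by
    constructor
    intro x hx g
    have h := hcomap (MulAut.conj g)
    rw [SetLike.ext_iff] at h
    have := (h x).mpr hx
    rw [Subgroup.mem_comap] at this
    simpa [MulAut.conj_apply] using this
  haveI : Finite (K ⧸ Δ) := Subgroup.finite_quotient_of_finiteIndex
  let ψ : MulAut (K ⧸ Δ) := QuotientGroup.congr Δ Δ (Φ : K ≃* K) hmap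
  haveI : Finite (MulAut (K ⧸ Δ)) :=
    Finite.of_injective (fun f : MulAut (K ⧸ Δ) => (f : (K ⧸ Δ) → (K ⧸ Δ)))
      DFunLike.coe_injective
  set n := orderOf ψ with hndef
  have hn : 0 < n := orderOf_pos ψ
  haveI : NeZero n := ⟨hn.ne'⟩
  -- ψ^m on the quotient is induced by Φ^m
  have hψ1 : ∀ k : K, ψ (QuotientGroup.mk k) = QuotientGroup.mk (Φ k) := fun k =>
    QuotientGroup.congr_mk Δ Δ (Φ : K ≃* K) hmap k
  have hψinv : ∀ k : K, ψ⁻¹ (QuotientGroup.mk k) = QuotientGroup.mk (Φ⁻¹ k) := by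
    intro k
    have h1 := hψ1 (Φ⁻¹ k)
    have h2 : Φ (Φ⁻¹ k) = k := by simp
    rw [h2] at h1
    rw [← h1]
    simp
  have hψ : ∀ (m : ℤ) (k : K),
      (ψ ^ m) (QuotientGroup.mk k) = QuotientGroup.mk ((Φ ^ m) k) := by
    intro m
    induction m using Int.induction_on with
    | zero => intro k; simp
    | succ i ih =>
      intro k
      rw [zpow_add_one, zpow_add_one, MulAut.mul_apply, MulAut.mul_apply, hψ1, ih]
    | pred i ih =>
      intro k
      rw [zpow_sub_one, zpow_sub_one, MulAut.mul_apply, MulAut.mul_apply, hψinv, ih]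
  have hΔiff : ∀ (m : ℤ) (k : K), (Φ ^ m) k ∈ Δ ↔ k ∈ Δ := by
    intro m k
    rw [← QuotientGroup.eq_one_iff, ← QuotientGroup.eq_one_iff k, ← hψ m k]
    exact map_eq_one_iff _ (MulEquiv.injective _)
  have hΓiff : ∀ m : ℤ, (n : ℤ) ∣ m → ∀ k : K, (Φ ^ m) k ∈ Γ ↔ k ∈ Γ := by
    rintro m ⟨j, rfl⟩ k
    have h1 : ψ ^ ((n : ℤ) * j) = 1 := by
      rw [zpow_mul, zpow_natCast, pow_orderOf_eq_one, one_zpow]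
    have h2 : (QuotientGroup.mk ((Φ ^ ((n : ℤ) * j)) k) : K ⧸ Δ) = QuotientGroup.mk k := by
      rw [← hψ, h1]; rfl
    have h3 : k⁻¹ * ((Φ ^ ((n : ℤ) * j)) k) ∈ Δ := QuotientGroup.eq.mp h2.symm
    have h4 : k⁻¹ * ((Φ ^ ((n : ℤ) * j)) k) ∈ Γ := hΔle h3
    constructor
    · intro h
      have h5 : (Φ ^ ((n : ℤ) * j)) k * (k⁻¹ * (Φ ^ ((n : ℤ) * j)) k)⁻¹ = k := by group
      exact h5 ▸ Γ.mul_mem h (Γ.inv_mem h4)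
    · intro h
      have h5 : k * (k⁻¹ * (Φ ^ ((n : ℤ) * j)) k) = (Φ ^ ((n : ℤ) * j)) k := by group
      exact h5 ▸ Γ.mul_mem h h4
  let GG := K ⋊[zpowersHom (MulAut K) Φ] Multiplicative ℤ
  let G' : Subgroup GG :=
    { carrier := {x | x.left ∈ Γ ∧ (n : ℤ) ∣ Multiplicative.toAdd x.right}
      one_mem' := ⟨Γ.one_mem, by simp⟩
      mul_mem' := by
        rintro a b ⟨ha1, ha2⟩ ⟨hb1, hb2⟩
        refine ⟨?_, ?_⟩
        · show (a * b).left ∈ Γ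
          rw [SemidirectProduct.mul_left]
          exact Γ.mul_mem ha1 ((hΓiff _ ha2 _).mpr hb1)
        · show (n : ℤ) ∣ Multiplicative.toAdd (a * b).right
          rw [SemidirectProduct.mul_right, toAdd_mul]
          exact dvd_add ha2 hb2
      inv_mem' := by
        rintro a ⟨ha1, ha2⟩
        refine ⟨?_, ?_⟩
        · show a⁻¹.left ∈ Γ
          rw [SemidirectProduct.inv_left]
          exact (hΓiff _ (by rw [toAdd_inv]; exact dvd_neg.mpr ha2) _).mpr (Γ.inv_mem ha1)
        · show (n : ℤ) ∣ Multiplicative.toAdd a⁻¹.right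
          rw [SemidirectProduct.inv_right, toAdd_inv]
          exact dvd_neg.mpr ha2 }
  let N' : Subgroup GG :=
    { carrier := {x | x.left ∈ Δ ∧ (n : ℤ) ∣ Multiplicative.toAdd x.right}
      one_mem' := ⟨Δ.one_mem, by simp⟩
      mul_mem' := by
        rintro a b ⟨ha1, ha2⟩ ⟨hb1, hb2⟩
        refine ⟨?_, ?_⟩
        · show (a * b).left ∈ Δ
          rw [SemidirectProduct.mul_left]
          exact Δ.mul_mem ha1 ((hΔiff _ _).mpr hb1)
        · show (n : ℤ) ∣ Multiplicative.toAdd (a * b).right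
          rw [SemidirectProduct.mul_right, toAdd_mul]
          exact dvd_add ha2 hb2
      inv_mem' := by
        rintro a ⟨ha1, ha2⟩
        refine ⟨?_, ?_⟩
        · show a⁻¹.left ∈ Δ
          rw [SemidirectProduct.inv_left]
          exact (hΔiff _ _).mpr (Δ.inv_mem ha1)
        · show (n : ℤ) ∣ Multiplicative.toAdd a⁻¹.right
          rw [SemidirectProduct.inv_right, toAdd_inv]
          exact dvd_neg.mpr ha2 }
  have hle : N' ≤ G' := fun x hx => ⟨hΔle hx.1, hx.2⟩
  have hmemiff : ∀ x y : GG, x⁻¹ * y ∈ N' ↔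
      ((QuotientGroup.mk x.left : K ⧸ Δ) = QuotientGroup.mk y.left ∧
        ((((Multiplicative.toAdd x.right : ℤ)) : ZMod n) = (((Multiplicative.toAdd y.right : ℤ)) : ZMod n))) := by
    intro x y
    have hleft : (x⁻¹ * y).left =
        (Φ ^ (-(Multiplicative.toAdd x.right))) (x.left⁻¹ * y.left) := by
      rw [SemidirectProduct.mul_left, SemidirectProduct.inv_left, SemidirectProduct.inv_right,
        map_mul]
      rfl
    have hright : Multiplicative.toAdd (x⁻¹ * y).right =
        Multiplicative.toAdd y.right - Multiplicative.toAdd x.right := by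
      rw [SemidirectProduct.mul_right, SemidirectProduct.inv_right, toAdd_mul, toAdd_inv]
      ring
    have hmem : (x⁻¹ * y ∈ N') ↔
        ((x⁻¹ * y).left ∈ Δ ∧ (n : ℤ) ∣ Multiplicative.toAdd (x⁻¹ * y).right) := Iff.rfl
    rw [hmem, hleft, hright, hΔiff, ← QuotientGroup.eq, ZMod.intCast_eq_intCast_iff,
      Int.modEq_iff_dvd]
  haveI : Finite (GG ⧸ N') := by
    refine Finite.of_injective (fun q : GG ⧸ N' => Quotient.liftOn' q
      (fun x => ((QuotientGroup.mk x.left : K ⧸ Δ),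
        ((((Multiplicative.toAdd x.right : ℤ)) : ZMod n)))) ?_) ?_
    · intro a b h
      have h' := (hmemiff a b).mp (QuotientGroup.leftRel_apply.mp h)
      exact Prod.ext h'.1 h'.2
    · intro q₁ q₂
      refine Quotient.inductionOn₂' q₁ q₂ ?_
      intro x y h
      apply Quotient.sound'
      rw [Prod.ext_iff] at h
      exact QuotientGroup.leftRel_apply.mpr ((hmemiff x y).mpr ⟨h.1, h.2⟩)
  haveI hNfi : N'.FiniteIndex := Subgroup.finiteIndex_of_finite_quotient
  refine ⟨G', Subgroup.finiteIndex_of_le hle, ?_⟩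
  intro k
  have hiff : SemidirectProduct.inl k ∈ G' ↔
      ((SemidirectProduct.inl k : GG).left ∈ Γ ∧
        (n : ℤ) ∣ Multiplicative.toAdd (SemidirectProduct.inl k : GG).right) := Iff.rfl
  rw [hiff]
  simp
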